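/- Let G = H·K be the coalescence of rooted graphs (H,x) and (K,y) (identify x with y), with weight functions α on H and β on K and combined weight function γ. Then M_G^γ = M_H^α + M_K^β + M_H^{ξ}(x) + M_K^{η}(y), where ξ = (|V_K|-1)α + B, η = (|V_H|-1)β + A, A = Σ_{u∈V_H} α(u), B = Σ_{v∈V_K} β(v). -/
import Mathlib


open Finset

/-- Moment of the coalescence `G = H·K` of rooted graphs `(H,x)`, `(K,y)`:
`M_G^γ = M_H^α + M_K^β + M_H^ξ(x) + M_K^η(y)` with
`ξ = (|V_K|-1)α + B` and `η = (|V_H|-1)β + A`. -/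
theorem coalescence_moment
    {VH VK VG : Type*} [Fintype VH] [Fintype VK] [Fintype VG]
    (H : SimpleGraph VH) (K : SimpleGraph VK) (G : SimpleGraph VG)
    (hH : H.Connected) (hK : K.Connected)
    (x : VH) (y : VK) (iH : VH → VG) (iK : VK → VG)
    (hiH : Function.Injective iH) (hiK : Function.Injective iK)
    (hxy : iH x = iK y)
    (hcover : ∀ w : VG, (∃ u, w = iH u) ∨ (∃ v, w = iK v))
    (hdisj : ∀ u v, iH u = iK v → u = x ∧ v = y)
    (hdH : ∀ u u', G.dist (iH u) (iH u') = H.dist u u')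
    (hdK : ∀ v v', G.dist (iK v) (iK v') = K.dist v v')
    (hcross : ∀ u v, G.dist (iH u) (iK v) = H.dist u x + K.dist y v)
    (α : VH → ℝ) (β : VK → ℝ) (hα : ∀ u, 0 ≤ α u) (hβ : ∀ v, 0 ≤ β v)
    (γ : VG → ℝ)
    (hγH : ∀ u, u ≠ x → γ (iH u) = α u)
    (hγK : ∀ v, v ≠ y → γ (iK v) = β v)
    (hγx : γ (iH x) = α x + β y) :
    ∑ w : VG, ∑ w' : VG, γ w' * (G.dist w w' : ℝ) =
      (∑ u : VH, ∑ u' : VH, α u' * (H.dist u u' : ℝ))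
      + (∑ v : VK, ∑ v' : VK, β v' * (K.dist v v' : ℝ))
      + (∑ u : VH, (((Fintype.card VK : ℝ) - 1) * α u + ∑ v : VK, β v)
          * (H.dist u x : ℝ))
      + (∑ v : VK, (((Fintype.card VH : ℝ) - 1) * β v + ∑ u : VH, α u)
          * (K.dist v y : ℝ)) := by
  classical
  set E : Finset VK := Finset.univ.erase y with hE
  -- splitting lemma for sums over VG
  have hsplit : ∀ g : VG → ℝ, ∑ w : VG, g w =
      (∑ u : VH, g (iH u)) + ∑ v ∈ E, g (iK v) := by
    intro g
    have hcover' : (Finset.univ : Finset VG) =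
        Finset.univ.image iH ∪ E.image iK := by
      ext w
      simp only [Finset.mem_univ, true_iff, Finset.mem_union, Finset.mem_image,
        hE, Finset.mem_erase]
      rcases hcover w with ⟨u, rfl⟩ | ⟨v, rfl⟩
      · exact Or.inl ⟨u, trivial, rfl⟩
      · by_cases hv : v = y
        · subst hv; exact Or.inl ⟨x, trivial, hxy⟩
        · exact Or.inr ⟨v, ⟨hv, trivial⟩, rfl⟩
    have hdisj' : Disjoint (Finset.univ.image iH) (E.image iK) := by
      rw [Finset.disjoint_left]
      rintro w hw hw'
      simp only [Finset.mem_image, hE, Finset.mem_erase] at hw hw'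
      obtain ⟨u, -, rfl⟩ := hw
      obtain ⟨v, ⟨hv, -⟩, hvw⟩ := hw'
      exact hv ((hdisj u v hvw.symm).2)
    calc ∑ w : VG, g w = ∑ w ∈ Finset.univ.image iH ∪ E.image iK, g w := by
          rw [← hcover']
      _ = _ := by
          rw [Finset.sum_union hdisj',
            Finset.sum_image (fun a _ b _ h => hiH h),
            Finset.sum_image (fun a _ b _ h => hiK h)]
  -- basic abbreviations
  set A : ℝ := ∑ u : VH, α u with hA
  set B : ℝ := ∑ v : VK, β v with hB
  set U : ℝ := ∑ u : VH, α u * (H.dist u x : ℝ) with hU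
  set SxH : ℝ := ∑ u : VH, (H.dist u x : ℝ) with hSxH
  set T : ℝ := ∑ v : VK, β v * (K.dist v y : ℝ) with hT
  set S : ℝ := ∑ v : VK, (K.dist v y : ℝ) with hS
  have hγ1 : ∀ u', γ (iH u') = α u' + if u' = x then β y else 0 := by
    intro u'
    by_cases h : u' = x
    · subst h; simp [hγx]
    · simp [hγH u' h, h]
  have hγ2 : ∀ v' ∈ E, γ (iK v') = β v' := fun v' hv' =>
    hγK v' (Finset.ne_of_mem_erase hv')
  have hBE : ∑ v' ∈ E, β v' = B - β y := by
    have h := Finset.sum_erase_add Finset.univ β (Finset.mem_univ y)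
    rw [hE]; rw [← hB] at h; linarith
  have hTE : ∑ v' ∈ E, β v' * (K.dist y v' : ℝ) = T := by
    have h : (fun v' => β v' * ((K.dist y v' : ℕ) : ℝ))
        = fun v' => β v' * ((K.dist v' y : ℕ) : ℝ) :=
      funext fun v' => by rw [SimpleGraph.dist_comm]
    rw [hE, h]
    exact Finset.sum_erase _ (by simp)
  have hSE : ∑ v ∈ E, (K.dist y v : ℝ) = S := by
    have h : (fun v => ((K.dist y v : ℕ) : ℝ)) = fun v => ((K.dist v y : ℕ) : ℝ) :=
      funext fun v => by rw [SimpleGraph.dist_comm]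
    rw [hE, h]
    exact Finset.sum_erase _ (by simp)
  have hcardE : (E.card : ℝ) = (Fintype.card VK : ℝ) - 1 := by
    rw [hE, Finset.card_erase_of_mem (Finset.mem_univ y), Finset.card_univ]
    have h1 : 1 ≤ Fintype.card VK := Fintype.card_pos_iff.mpr ⟨y⟩
    rw [Nat.cast_sub h1, Nat.cast_one]
  -- split the LHS
  rw [hsplit]
  have hinner : ∀ w : VG, ∑ w' : VG, γ w' * (G.dist w w' : ℝ)
      = (∑ u' : VH, γ (iH u') * (G.dist w (iH u') : ℝ))
        + ∑ v' ∈ E, γ (iK v') * (G.dist w (iK v') : ℝ) :=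
    fun w => hsplit _
  simp only [hinner]
  rw [Finset.sum_add_distrib, Finset.sum_add_distrib]
  -- term 1
  have t1 : ∑ u : VH, ∑ u' : VH, γ (iH u') * (G.dist (iH u) (iH u') : ℝ)
      = (∑ u : VH, ∑ u' : VH, α u' * (H.dist u u' : ℝ)) + β y * SxH := by
    rw [hSxH, Finset.mul_sum, ← Finset.sum_add_distrib]
    refine Finset.sum_congr rfl fun u _ => ?_
    simp only [hdH, hγ1, add_mul, ite_mul, zero_mul]
    rw [Finset.sum_add_distrib,
      Finset.sum_ite_eq' Finset.univ x (fun u' => β y * ((H.dist u u' : ℕ) : ℝ))]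
    simp [SimpleGraph.dist_comm]
  -- term 2
  have t2 : ∑ u : VH, ∑ v' ∈ E, γ (iK v') * (G.dist (iH u) (iK v') : ℝ)
      = (B - β y) * SxH + (Fintype.card VH : ℝ) * T := by
    calc ∑ u : VH, ∑ v' ∈ E, γ (iK v') * (G.dist (iH u) (iK v') : ℝ)
        = ∑ u : VH, ((∑ v' ∈ E, β v') * (H.dist u x : ℝ)
            + ∑ v' ∈ E, β v' * (K.dist y v' : ℝ)) := by
          refine Finset.sum_congr rfl fun u _ => ?_
          rw [Finset.sum_mul, ← Finset.sum_add_distrib]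
          refine Finset.sum_congr rfl fun v' hv' => ?_
          rw [hγ2 v' hv', hcross]
          push_cast
          ring
      _ = (∑ v' ∈ E, β v') * SxH
            + (Fintype.card VH : ℝ) * (∑ v' ∈ E, β v' * (K.dist y v' : ℝ)) := by
          rw [Finset.sum_add_distrib, ← Finset.mul_sum, Finset.sum_const,
            Finset.card_univ, nsmul_eq_mul, hSxH, mul_comm ((∑ v' ∈ E, β v'))]
      _ = _ := by rw [hBE, hTE]
  -- term 3
  have t3 : ∑ v ∈ E, ∑ u' : VH, γ (iH u') * (G.dist (iK v) (iH u') : ℝ)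
      = ((Fintype.card VK : ℝ) - 1) * U + (A + β y) * S := by
    have hinner3 : ∀ v, ∑ u' : VH, γ (iH u') * (G.dist (iK v) (iH u') : ℝ)
        = U + (A + β y) * (K.dist y v : ℝ) := by
      intro v
      have hd : ∀ u', ((G.dist (iK v) (iH u') : ℕ) : ℝ)
          = (H.dist u' x : ℝ) + (K.dist y v : ℝ) := by
        intro u'
        rw [SimpleGraph.dist_comm, hcross]
        push_cast; ring
      have expand : ∀ u', γ (iH u') * ((G.dist (iK v) (iH u') : ℕ) : ℝ)
          = α u' * (H.dist u' x : ℝ) + α u' * (K.dist y v : ℝ)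
            + (if u' = x then β y * ((H.dist u' x : ℝ) + (K.dist y v : ℝ)) else 0) := by
        intro u'
        rw [hd, hγ1]
        by_cases h : u' = x <;> simp [h] <;> ring
      simp only [expand]
      rw [Finset.sum_add_distrib, Finset.sum_add_distrib, ← Finset.sum_mul,
        Finset.sum_ite_eq' Finset.univ x
          (fun u' => β y * ((H.dist u' x : ℝ) + (K.dist y v : ℝ)))]
      simp only [Finset.mem_univ, if_true, SimpleGraph.dist_self, Nat.cast_zero, zero_add]
      rw [hU, hA]
      ring
    rw [Finset.sum_congr rfl fun v _ => hinner3 v, Finset.sum_add_distrib,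
      Finset.sum_const, nsmul_eq_mul, ← Finset.mul_sum, hSE, hcardE]
  -- term 4
  have t4 : ∑ v ∈ E, ∑ v' ∈ E, γ (iK v') * (G.dist (iK v) (iK v') : ℝ)
      = (∑ v : VK, ∑ v' : VK, β v' * (K.dist v v' : ℝ)) - T - β y * S := by
    have step : ∀ v, ∑ v' ∈ E, γ (iK v') * (G.dist (iK v) (iK v') : ℝ)
        = ∑ v' ∈ E, β v' * (K.dist v v' : ℝ) :=
      fun v => Finset.sum_congr rfl fun v' hv' => by rw [hγ2 v' hv', hdK]
    simp only [step]
    have full : ∑ v : VK, ∑ v' : VK, β v' * (K.dist v v' : ℝ)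
        = (∑ v : VK, ∑ v' ∈ E, β v' * (K.dist v v' : ℝ)) + β y * S := by
      rw [hS, Finset.mul_sum, ← Finset.sum_add_distrib]
      refine Finset.sum_congr rfl fun v _ => ?_
      rw [hE]
      exact (Finset.sum_erase_add Finset.univ _ (Finset.mem_univ y)).symm
    have split2 : (∑ v ∈ E, ∑ v' ∈ E, β v' * (K.dist v v' : ℝ)) + T
        = ∑ v : VK, ∑ v' ∈ E, β v' * (K.dist v v' : ℝ) := by
      rw [← hTE]
      exact Finset.sum_erase_add Finset.univ _ (Finset.mem_univ y)
    rw [full, ← split2]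
    ring
  rw [t1, t2, t3, t4]
  -- RHS expansions
  have r1 : ∑ u : VH, (((Fintype.card VK : ℝ) - 1) * α u + B) * (H.dist u x : ℝ)
      = ((Fintype.card VK : ℝ) - 1) * U + B * SxH := by
    rw [hU, hSxH, Finset.mul_sum, Finset.mul_sum, ← Finset.sum_add_distrib]
    refine Finset.sum_congr rfl fun u _ => ?_
    ring
  have r2 : ∑ v : VK, (((Fintype.card VH : ℝ) - 1) * β v + A) * (K.dist v y : ℝ)
      = ((Fintype.card VH : ℝ) - 1) * T + A * S := by
    rw [hT, hS, Finset.mul_sum, Finset.mul_sum, ← Finset.sum_add_distrib]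
    refine Finset.sum_congr rfl fun v _ => ?_
    ring
  rw [r1, r2]
  ring
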